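/- Let X be a graph and α, β ≥ 0. If e, e', e'' are oriented edges with e'' in the cone of parameter α around e' and e' in the cone of parameter β around e, then e'' is in the cone of parameter α + β around e. -/

import Mathlib

/-- A graph: vertices, oriented edges, origin/terminus maps, and a
fixed-point-free edge-reversing involution. -/
structure MGraph where
  V : Type
  E : Type
  o : E → V
  t : E → V
  rev : E → E
  rev_o : ∀ e, o (rev e) = t e
  rev_t : ∀ e, t (rev e) = o e
  rev_rev : ∀ e, rev (rev e) = e
  rev_ne : ∀ e, rev e ≠ e

namespace MGraph

variable (X : MGraph)

/-- A walk from `x` to `y` given by a list of consecutive edges. -/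
def IsWalk : List X.E → X.V → X.V → Prop
  | [], x, y => x = y
  | e :: es, x, y => X.o e = x ∧ IsWalk es (X.t e) y

/-- The vertices visited by a walk starting at `x`. -/
def walkVerts : X.V → List X.E → List X.V
  | x, [] => [x]
  | x, e :: es => x :: walkVerts (X.t e) es

/-- The graph metric (length of each edge is 1), valued in `ℕ∞`. -/
noncomputable def dist (x y : X.V) : ℕ∞ :=
  sInf {n : ℕ∞ | ∃ es, X.IsWalk es x y ∧ (es.length : ℕ∞) = n}

/-- The distance from `x` to `y` in the graph with the vertex `v` removed. -/
noncomputable def delDist (v x y : X.V) : ℕ∞ :=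
  sInf {n : ℕ∞ | ∃ es, X.IsWalk es x y ∧ v ∉ X.walkVerts x es ∧ (es.length : ℕ∞) = n}

/-- The angle at `v = t e1 = o e2` between two edges `e1, e2`: the distance
from `o e1` to `t e2` in the graph with the vertex `t e1` removed. -/
noncomputable def angle (e1 e2 : X.E) : ℕ∞ :=
  X.delDist (X.t e1) (X.o e1) (X.t e2)

/-- A geodesic is a walk whose length realizes the distance. -/
def IsGeodesic (es : List X.E) (x y : X.V) : Prop :=
  X.IsWalk es x y ∧ (es.length : ℕ∞) = X.dist x y

/-- `∠_c(x1,x2) > θ` : there are edges `e1, e2` with `t e1 = o e2 = c`, each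
lying on a geodesic between `c` and `x_i`, making an angle `> θ` at `c`. -/
def AngleGT (c x1 x2 : X.V) (θ : ℕ∞) : Prop :=
  ∃ (e1 e2 : X.E) (es1 es2 : List X.E), X.t e1 = c ∧ X.o e2 = c ∧
    X.IsGeodesic (X.rev e1 :: es1) c x1 ∧ X.IsGeodesic (e2 :: es2) c x2 ∧
    θ < X.angle e1 e2

/-- All pairs of consecutive edges of a walk make an angle at most `θ`. -/
def AngleBounded (θ : ℕ∞) : List X.E → Prop
  | [] => True
  | [_] => True
  | e :: e' :: es => X.angle e e' ≤ θ ∧ AngleBounded θ (e' :: es)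

/-- `v` is a vertex of the cone of parameter `θ` around the oriented edge `e`:
it lies on a path starting at `o e` by the edge `e`, of length at most `θ`,
whose consecutive edges make angles at most `θ`. -/
def InConeV (θ : ℕ∞) (e : X.E) (v : X.V) : Prop :=
  ∃ (es : List X.E) (y : X.V), X.IsWalk (e :: es) (X.o e) y ∧
    ((e :: es).length : ℕ∞) ≤ θ ∧ X.AngleBounded θ (e :: es) ∧
    v ∈ X.walkVerts (X.o e) (e :: es)

/-- `ε` is an edge of the cone of parameter `θ` around the oriented edge `e`. -/
def InConeE (θ : ℕ∞) (e ε : X.E) : Prop :=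
  ∃ (es : List X.E) (y : X.V), X.IsWalk (e :: es) (X.o e) y ∧
    ((e :: es).length : ℕ∞) ≤ θ ∧ X.AngleBounded θ (e :: es) ∧
    (ε ∈ e :: es ∨ X.rev ε ∈ e :: es)

/-- A graph is fine if for each edge `e` and each `L`, only finitely many
edges arrive at `o e` making an angle at most `L` with `e`. -/
def Fine : Prop :=
  ∀ (e : X.E) (L : ℕ), {e' : X.E | X.t e' = X.o e ∧ X.angle e' e ≤ (L : ℕ∞)}.Finite

/-- δ-hyperbolicity: geodesic triangles are δ-thin. -/
def Hyperbolic (δ : ℕ) : Prop :=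
  ∀ (a b c : X.V) (p q r : List X.E),
    X.IsGeodesic p a b → X.IsGeodesic q b c → X.IsGeodesic r a c →
    ∀ v ∈ X.walkVerts a p, ∃ w, (w ∈ X.walkVerts b q ∨ w ∈ X.walkVerts a r) ∧
      X.dist v w ≤ (δ : ℕ∞)

/-- The four point inequality form of δ-hyperbolicity. -/
def FourPoint (δ : ℕ) : Prop :=
  ∀ a x y y' : X.V,
    X.dist a x + X.dist y y' ≤
      max (X.dist a y + X.dist y' x) (X.dist a y' + X.dist y x) + (δ : ℕ∞)

/-- Connectedness. -/
def Connected : Prop := ∀ x y : X.V, ∃ es, X.IsWalk es x y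

/-- `t` is on an `α`-geodesic between `x` and `a`. -/
def OnAlphaGeod (α : ℕ∞) (t x a : X.V) : Prop :=
  X.dist x t + X.dist t a ≤ X.dist x a + α

/-- The set `𝓔_{a,x}(ρ)` of edges at distance `ρ` from `a` lying on
geodesics between `a` and `x`. -/
def GeodEdgeAt (a x : X.V) (ρ : ℕ∞) (e : X.E) : Prop :=
  X.dist a (X.o e) = ρ ∧ ∃ es, (X.IsGeodesic es a x ∨ X.IsGeodesic es x a) ∧ e ∈ es

/-- The set `U_α[a,x]` of points on `α`-conical-geodesics between `x` and `a`. -/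
def ConicalSet (α : ℕ) (a x : X.V) : Set X.V :=
  {t | X.OnAlphaGeod (α : ℕ∞) t x a ∧ X.dist a t ≤ X.dist a x ∧
       ∀ e, X.GeodEdgeAt a x (X.dist a t) e → X.InConeV ((40 * α : ℕ) : ℕ∞) e t}

end MGraph


namespace MGraph

variable {X : MGraph}

lemma isWalk_append {l1 l2 : List X.E} {x y : X.V} :
    X.IsWalk (l1 ++ l2) x y ↔ ∃ z, X.IsWalk l1 x z ∧ X.IsWalk l2 z y := by
  induction l1 generalizing x with
  | nil => simp [IsWalk]
  | cons a l ih =>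
    simp only [List.cons_append, IsWalk, List.append_eq, ih]
    constructor
    · rintro ⟨ha, z, hz1, hz2⟩
      exact ⟨z, ⟨ha, hz1⟩, hz2⟩
    · rintro ⟨z, ⟨ha, hz1⟩, hz2⟩
      exact ⟨ha, z, hz1, hz2⟩

lemma ab_mono {θ θ' : ℕ∞} (h : θ ≤ θ') :
    ∀ (l : List X.E), X.AngleBounded θ l → X.AngleBounded θ' l
  | [], _ => trivial
  | [_], _ => trivial
  | _ :: b :: l, hl => ⟨hl.1.trans h, ab_mono h (b :: l) hl.2⟩

lemma ab_tail {θ : ℕ∞} {a : X.E} {l : List X.E} (h : X.AngleBounded θ (a :: l)) :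
    X.AngleBounded θ l := by
  cases l with
  | nil => trivial
  | cons b l => exact h.2

lemma ab_prefix {θ : ℕ∞} :
    ∀ (l1 l2 : List X.E), X.AngleBounded θ (l1 ++ l2) → X.AngleBounded θ l1
  | [], _, _ => trivial
  | [_], _, _ => trivial
  | a :: b :: l, l2, h => ⟨h.1, ab_prefix (b :: l) l2 h.2⟩

lemma ab_last {θ : ℕ∞} {f c : X.E} :
    ∀ (l : List X.E), X.AngleBounded θ (l ++ [f, c]) → X.angle f c ≤ θ
  | [], h => h.1
  | _ :: l, h => ab_last l (ab_tail h)

lemma ab_append_cons {θ : ℕ∞} {c : X.E} {l2 : List X.E} :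
    ∀ (l1 : List X.E), X.AngleBounded θ (l1 ++ [c]) → X.AngleBounded θ (c :: l2) →
      X.AngleBounded θ (l1 ++ c :: l2)
  | [], _, h2 => h2
  | [a], h1, h2 => ⟨h1.1, h2⟩
  | a :: b :: l1, h1, h2 => ⟨h1.1, ab_append_cons (b :: l1) h1.2 h2⟩

lemma mem_walkVerts_self {x : X.V} (l : List X.E) : x ∈ X.walkVerts x l := by
  cases l <;> simp [walkVerts]

lemma not_mem_walkVerts_append {v z : X.V} :
    ∀ (l1 : List X.E) (x : X.V), X.IsWalk l1 x z → v ∉ X.walkVerts x l1 →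
      ∀ (l2 : List X.E), v ∉ X.walkVerts z l2 → v ∉ X.walkVerts x (l1 ++ l2)
  | [], x, hw, h1, l2, h2 => by
      cases hw; exact h2
  | a :: l1, x, hw, h1, l2, h2 => by
      simp only [walkVerts, List.mem_cons, List.cons_append] at h1 ⊢
      push_neg at h1 ⊢
      exact ⟨h1.1, not_mem_walkVerts_append l1 (X.t a) hw.2 h1.2 l2 h2⟩

lemma delDist_le {v x y : X.V} {es : List X.E} (hw : X.IsWalk es x y)
    (hv : v ∉ X.walkVerts x es) : X.delDist v x y ≤ (es.length : ℕ∞) :=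
  sInf_le ⟨es, hw, hv, rfl⟩

lemma delDist_witness {v x y : X.V} {n : ℕ} (h : X.delDist v x y ≤ (n : ℕ∞)) :
    ∃ es, X.IsWalk es x y ∧ v ∉ X.walkVerts x es ∧ es.length ≤ n := by
  have hlt : X.delDist v x y < (n : ℕ∞) + 1 :=
    lt_of_le_of_lt h ((ENat.lt_add_one_iff (by simp)).2 le_rfl)
  rw [delDist, sInf_lt_iff] at hlt
  obtain ⟨a, ⟨es, hw, hv, rfl⟩, ha⟩ := hlt
  refine ⟨es, hw, hv, ?_⟩
  exact_mod_cast (ENat.lt_add_one_iff (by simp)).1 ha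

lemma delDist_self_top {v y : X.V} : X.delDist v v y = ⊤ := by
  rw [delDist, sInf_eq_top]
  rintro a ⟨es, hw, hv, rfl⟩
  exact absurd (X.mem_walkVerts_self es) hv

end MGraph

/-- composition of cones: if `e'' ∈ Co_α(e')` and `e' ∈ Co_β(e)`
then `e'' ∈ Co_{α+β}(e)`. -/
theorem stmt_5 (X : MGraph) (α β : ℕ) (e e' e'' : X.E)
    (h1 : X.InConeE (α : ℕ∞) e' e'') (h2 : X.InConeE (β : ℕ∞) e e') :
    X.InConeE ((α + β : ℕ) : ℕ∞) e e'' := by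
  obtain ⟨es', y1, hw1, hl1, hab1, hm1⟩ := h1
  obtain ⟨esβ, y2, hw2, hl2, hab2, hm2⟩ := h2
  have hβθ : (β : ℕ∞) ≤ ((α + β : ℕ) : ℕ∞) := by exact_mod_cast Nat.le_add_left β α
  have hαθ : (α : ℕ∞) ≤ ((α + β : ℕ) : ℕ∞) := by exact_mod_cast Nat.le_add_right α β
  have main : (e'' ∈ es' ∨ X.rev e'' ∈ es') ∨ (e'' = e' ∨ X.rev e'' = e') := by
    rcases hm1 with h | h <;> rcases List.mem_cons.1 h with h | h <;> tauto
  rcases main with hmem | hhead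
  · -- main case: e'' or its reverse lies in the tail es'
    rcases hm2 with hc | hc
    · -- case A : e' occurs in the β-walk
      obtain ⟨pre, post, hW⟩ := List.append_of_mem hc
      cases pre with
      | nil =>
        simp only [List.nil_append] at hW
        injection hW with h1 h2
        subst h1
        refine ⟨es', y1, hw1, le_trans hl1 hαθ, MGraph.ab_mono hαθ _ hab1, ?_⟩
        rcases hmem with h | h
        · exact Or.inl (List.mem_cons_of_mem _ h)
        · exact Or.inr (List.mem_cons_of_mem _ h)
      | cons e0 pre' =>
        rw [List.cons_append] at hW
        injection hW with h1 h2
        subst h1; subst h2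
        obtain ⟨z, hpre, hrest⟩ :=
          MGraph.isWalk_append.1 (show X.IsWalk ((e :: pre') ++ e' :: post) (X.o e) y2 from hw2)
        have hz : X.o e' = z := hrest.1
        refine ⟨pre' ++ e' :: es', y1, ?_, ?_, ?_, ?_⟩
        · rw [show e :: (pre' ++ e' :: es') = (e :: pre') ++ (e' :: es') from by simp]
          exact MGraph.isWalk_append.2 ⟨z, hpre, hz, hw1.2⟩
        · have l2' : (e :: (pre' ++ e' :: post)).length ≤ β := by exact_mod_cast hl2
          have l1' : (e' :: es').length ≤ α := by exact_mod_cast hl1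
          have : (e :: (pre' ++ e' :: es')).length ≤ α + β := by
            simp only [List.length_cons, List.length_append] at l2' l1' ⊢; omega
          exact_mod_cast this
        · have hpre1 : X.AngleBounded ((α + β : ℕ) : ℕ∞) ((e :: pre') ++ [e']) := by
            apply MGraph.ab_mono hβθ
            apply MGraph.ab_prefix _ post
            rw [show ((e :: pre') ++ [e']) ++ post = e :: (pre' ++ e' :: post) from by simp]
            exact hab2
          have hres := MGraph.ab_append_cons (l2 := es') (e :: pre') hpre1
            (MGraph.ab_mono hαθ _ hab1)
          rw [show e :: (pre' ++ e' :: es') = (e :: pre') ++ e' :: es' from by simp]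
          exact hres
        · rcases hmem with h | h
          · exact Or.inl (by simp [h])
          · exact Or.inr (by simp [h])
    · -- case B : rev e' occurs in the β-walk
      obtain ⟨pre, post, hW⟩ := List.append_of_mem hc
      cases es' with
      | nil => rcases hmem with h | h <;> simp at h
      | cons g es'' =>
      have hang1 : X.angle e' g ≤ (α : ℕ∞) := hab1.1
      cases pre with
      | nil =>
        simp only [List.nil_append] at hW
        injection hW with h1 h2
        have he' : e' = X.rev e := by rw [h1, X.rev_rev]
        have hoe : X.o e = X.t e' := by rw [h1, X.rev_o]
        have hte : X.t e = X.o e' := by rw [h1, X.rev_t]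
        by_cases hloop : X.t e' = X.o e'
        · exfalso
          have htop : X.angle e' g = ⊤ := by
            rw [MGraph.angle, hloop]; exact MGraph.delDist_self_top
          rw [htop] at hang1
          exact (by simp : ((α : ℕ∞) ≠ ⊤)) (top_le_iff.1 hang1)
        · refine ⟨e' :: g :: es'', y1, ⟨rfl, ?_⟩, ?_, ?_, ?_⟩
          · rw [hte]; exact hw1
          · have l1' : (e' :: g :: es'').length ≤ α := by exact_mod_cast hl1
            have l2' : (e :: esβ).length ≤ β := by exact_mod_cast hl2
            have : (e :: e' :: g :: es'').length ≤ α + β := by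
              simp only [List.length_cons] at l1' l2' ⊢; omega
            exact_mod_cast this
          · refine ⟨?_, MGraph.ab_mono hαθ _ hab1⟩
            have h0 : X.angle e e' ≤ 0 := by
              rw [MGraph.angle, ← hoe]
              have hne : X.t e ∉ X.walkVerts (X.o e) [] := by
                simp only [MGraph.walkVerts, List.mem_singleton]
                rw [hte, hoe]
                exact fun hh => hloop hh.symm
              simpa using MGraph.delDist_le (es := []) rfl hne
            exact h0.trans (zero_le)
          · rcases hmem with h | h
            · exact Or.inl (List.mem_cons_of_mem _ (List.mem_cons_of_mem _ h))
            · exact Or.inr (List.mem_cons_of_mem _ (List.mem_cons_of_mem _ h))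
      | cons e0 pre' =>
        rw [List.cons_append] at hW
        injection hW with h1 h2
        subst h1; subst h2
        obtain ⟨z, hpre, hrest⟩ := MGraph.isWalk_append.1
          (show X.IsWalk ((e :: pre') ++ X.rev e' :: post) (X.o e) y2 from hw2)
        have hz : X.o (X.rev e') = z := hrest.1
        have hzte : z = X.t e' := by rw [← hz, X.rev_o]
        rcases List.eq_nil_or_concat (e :: pre') with h | ⟨l1, f, hlf⟩
        · simp at h
        rw [List.concat_eq_append] at hlf
        have htf : X.t f = X.t e' := by
          rw [hlf] at hpre
          obtain ⟨w, _, hf⟩ := MGraph.isWalk_append.1 hpre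
          exact hzte ▸ hf.2
        have hangf : X.angle f (X.rev e') ≤ (β : ℕ∞) := by
          have hab' : X.AngleBounded (β : ℕ∞) ((l1 ++ [f, X.rev e']) ++ post) := by
            rw [show (l1 ++ [f, X.rev e']) ++ post = (l1 ++ [f]) ++ X.rev e' :: post from by simp]
            rw [← hlf]
            exact hab2
          exact MGraph.ab_last l1 (MGraph.ab_prefix _ post hab')
        rw [MGraph.angle, X.rev_t, htf] at hangf
        rw [MGraph.angle] at hang1
        obtain ⟨w1, hww1, hv1, hlw1⟩ := MGraph.delDist_witness hangf
        obtain ⟨w2, hww2, hv2, hlw2⟩ := MGraph.delDist_witness hang1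
        have hangfg : X.angle f g ≤ ((α + β : ℕ) : ℕ∞) := by
          rw [MGraph.angle, htf]
          have hcat : X.IsWalk (w1 ++ w2) (X.o f) (X.t g) :=
            MGraph.isWalk_append.2 ⟨X.o e', hww1, hww2⟩
          have hv : X.t e' ∉ X.walkVerts (X.o f) (w1 ++ w2) :=
            MGraph.not_mem_walkVerts_append w1 (X.o f) hww1 hv1 w2 hv2
          refine (MGraph.delDist_le hcat hv).trans ?_
          have : (w1 ++ w2).length ≤ α + β := by
            simp only [List.length_append]; omega
          exact_mod_cast this
        refine ⟨pre' ++ g :: es'', y1, ?_, ?_, ?_, ?_⟩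
        · rw [show e :: (pre' ++ g :: es'') = (e :: pre') ++ (g :: es'') from by simp]
          refine MGraph.isWalk_append.2 ⟨z, hpre, ?_⟩
          rw [hzte]; exact hw1.2
        · have l2' : (e :: (pre' ++ X.rev e' :: post)).length ≤ β := by exact_mod_cast hl2
          have l1' : (e' :: g :: es'').length ≤ α := by exact_mod_cast hl1
          have : (e :: (pre' ++ g :: es'')).length ≤ α + β := by
            simp only [List.length_cons, List.length_append] at l2' l1' ⊢; omega
          exact_mod_cast this
        · have hab_pre : X.AngleBounded ((α + β : ℕ) : ℕ∞) (l1 ++ [f]) := by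
            rw [← hlf]
            apply MGraph.ab_mono hβθ
            apply MGraph.ab_prefix (e :: pre') (X.rev e' :: post)
            rw [show (e :: pre') ++ X.rev e' :: post = e :: (pre' ++ X.rev e' :: post) from by simp]
            exact hab2
          have hres := MGraph.ab_append_cons (l2 := g :: es'') l1 hab_pre
            ⟨hangfg, MGraph.ab_mono hαθ _ (MGraph.ab_tail hab1)⟩
          rw [show e :: (pre' ++ g :: es'') = l1 ++ f :: g :: es'' from by
            rw [← List.cons_append, hlf]; simp]
          exact hres
        · rcases hmem with h | h
          · left; simp only [List.mem_cons, List.mem_append] at h ⊢; tauto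
          · right; simp only [List.mem_cons, List.mem_append] at h ⊢; tauto
  · -- head case: e'' is e' itself or its reverse, reuse the β-walk
    refine ⟨esβ, y2, hw2, le_trans hl2 hβθ, MGraph.ab_mono hβθ _ hab2, ?_⟩
    rcases hhead with rfl | h
    · exact hm2
    · have he'' : e'' = X.rev e' := by rw [← h, X.rev_rev]
      rw [he'', X.rev_rev]
      exact hm2.symm
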